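/- The profile tree T of an NBW A on an infinite word w has only finitely many infinite branches. -/

import Mathlib

/-!
Profile trees for Büchi determinization (Fisman–Kupferman–Vardi–Wilke style profiles).
Common definitions: nondeterministic Büchi word automata (NBW), the run DAG `G`,
profiles of nodes, and the pruned run DAG `G'`.
-/

/-- A nondeterministic Büchi word automaton `A = (Alph, Q, Qin, ρ, F)` with `Qin ∩ F = ∅`. -/
structure NBW (Alph Q : Type*) where
  Qin : Set Q
  ρ : Q → Alph → Set Q
  F : Set Q
  disj : Qin ∩ F = ∅

variable {Alph Q : Type*} (A : NBW Alph Q) (w : ℕ → Alph)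

/-- Lexicographic order `L₁ ≤ L₂` on profiles (lists over ℕ). -/
def lexLE (L₁ L₂ : List ℕ) : Prop :=
  List.Lex (· < ·) L₁ L₂ ∨ L₁ = L₂

/-- Strict lexicographic order `L₁ < L₂` on profiles. -/
def lexLT (L₁ L₂ : List ℕ) : Prop :=
  List.Lex (· < ·) L₁ L₂

open Classical in
/-- The profiles of all finite initial runs of `A` (on `w`) to the node `v = (q, i)`:
for each run `p₀,…,p_i` with `p₀ ∈ Qin`, `p_{j+1} ∈ ρ(p_j, w_j)` and `p_i = q`, the
sequence of `F`-visitation labels `f(p₀,0) ⋯ f(p_i,i)` (where `f` is 1 on `F`-nodes, else 0). -/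
def runProfiles (v : Q × ℕ) : Set (List ℕ) :=
  { L | ∃ p : ℕ → Q, p 0 ∈ A.Qin ∧ (∀ j < v.2, p (j + 1) ∈ A.ρ (p j) (w j)) ∧
        p v.2 = v.1 ∧ L = (List.range (v.2 + 1)).map (fun j => if p j ∈ A.F then 1 else 0) }

/-- `v` is a node of the run DAG `G = (V, E)` (equivalently of the pruned DAG `G'`):
there is a finite run of `A` to `v.1` on `w₀ ⋯ w_{v.2 - 1}`. -/
def memV (v : Q × ℕ) : Prop := (runProfiles A w v).Nonempty

/-- `L` is the lexicographically maximal profile among all initial paths to `v`. -/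
def IsMaxProfile (v : Q × ℕ) (L : List ℕ) : Prop :=
  L ∈ runProfiles A w v ∧ ∀ L' ∈ runProfiles A w v, lexLE L' L

open Classical in
/-- The profile `h_v` of a node `v`: the lexicographically maximal profile of an
initial path to `v` (junk value `[]` if `v` is not a node of the DAG). -/
noncomputable def profile (v : Q × ℕ) : List ℕ :=
  if h : ∃ L, IsMaxProfile A w v L then h.choose else []

/-- The edge relation `E` of the run DAG `G`: `E((q,i), (q',i+1))` iff `(q,i) ∈ V`
and `q' ∈ ρ(q, w_i)`. -/
def edgeG (u v : Q × ℕ) : Prop :=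
  memV A w u ∧ v.2 = u.2 + 1 ∧ v.1 ∈ A.ρ u.1 (w u.2)

/-- The edge relation `E'` of the pruned run DAG `G'`: `(u,v) ∈ E` and every
`E`-parent `u'` of `v` satisfies `h_{u'} ≤ h_u`. -/
def edgeG' (u v : Q × ℕ) : Prop :=
  edgeG A w u v ∧ ∀ u', edgeG A w u' v → lexLE (profile A w u') (profile A w u)

/-- The equivalence class (under equality of profiles, levelwise) of a node `u` of `G'`. -/
def classOf (u : Q × ℕ) : Set (Q × ℕ) :=
  { v | memV A w v ∧ v.2 = u.2 ∧ profile A w v = profile A w u }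

/-- `C` is a class (node) of the profile tree `T` on level `i`. -/
def ClassAt (C : Set (Q × ℕ)) (i : ℕ) : Prop :=
  ∃ u, memV A w u ∧ u.2 = i ∧ C = classOf A w u

/-- The child relation of the profile tree `T`: `[v]` is a child of `[u]`
whenever `(u, v) ∈ E'`. -/
def childC (C D : Set (Q × ℕ)) : Prop :=
  ∃ u v, edgeG' A w u v ∧ memV A w v ∧ C = classOf A w u ∧ D = classOf A w v

/-- `D` is a descendant of `C` in `T`: there is a (possibly empty) path from `C` to `D`. -/
def DescC : Set (Q × ℕ) → Set (Q × ℕ) → Prop := Relation.ReflTransGen (childC A w)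

/-- `C` is an `F`-class: all its members are `F`-nodes. -/
def IsFClass (C : Set (Q × ℕ)) : Prop := ∀ v ∈ C, v.1 ∈ A.F

/-- `h_C ≤ h_D` for classes `C`, `D` (members of a class all share one profile). -/
def profLE (C D : Set (Q × ℕ)) : Prop :=
  ∀ u ∈ C, ∀ v ∈ D, lexLE (profile A w u) (profile A w v)

/-- `h_C < h_D` for classes `C`, `D`. -/
def profLT (C D : Set (Q × ℕ)) : Prop :=
  ∀ u ∈ C, ∀ v ∈ D, lexLT (profile A w u) (profile A w v)

/-- An infinite branch of `T`: a class on each level, consecutive ones related by the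
child relation. -/
def IsBranch (b : ℕ → Set (Q × ℕ)) : Prop :=
  (∀ i, ClassAt A w (b i) i) ∧ ∀ i, childC A w (b i) (b (i + 1))


/-! ### Auxiliary lemmas -/

open Classical in
/-- The `F`-label of a node. -/
noncomputable def fval (v : Q × ℕ) : ℕ := if v.1 ∈ A.F then 1 else 0

lemma lexLE_iff {L₁ L₂ : List ℕ} : lexLE L₁ L₂ ↔ L₁ ≤ L₂ := by
  rw [le_iff_lt_or_eq]; rfl

lemma length_of_mem_runProfiles {v : Q × ℕ} {L : List ℕ}
    (h : L ∈ runProfiles A w v) : L.length = v.2 + 1 := by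
  obtain ⟨p, -, -, -, rfl⟩ := h; simp

lemma runProfiles_finite (v : Q × ℕ) : (runProfiles A w v).Finite := by
  classical
  apply Set.Finite.subset (Set.finite_range (fun g : Fin (v.2 + 1) → Bool =>
    (List.range (v.2 + 1)).map (fun j => if h : j < v.2 + 1 then (if g ⟨j, h⟩ then 1 else 0) else 0)))
  rintro L ⟨p, -, -, -, rfl⟩
  refine ⟨fun k => decide (p k.1 ∈ A.F), ?_⟩
  apply List.map_congr_left
  intro j hj
  rw [List.mem_range] at hj
  simp [hj]

lemma exists_maxProfile {v : Q × ℕ} (hv : memV A w v) : ∃ L, IsMaxProfile A w v L := by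
  obtain ⟨L, hL, hmax⟩ : ∃ L ∈ runProfiles A w v, ∀ L' ∈ runProfiles A w v, id L ≤ id L' → id L = id L' := by
    obtain ⟨L, hL, hm⟩ := (runProfiles_finite A w v).exists_maximal hv
    exact ⟨L, hL, fun L' hL' h => le_antisymm h (hm hL' h)⟩
  refine ⟨L, hL, fun L' hL' => lexLE_iff.mpr ?_⟩
  exact le_of_not_gt fun hlt => absurd (hmax L' hL' hlt.le) (ne_of_lt hlt)

lemma profile_spec {v : Q × ℕ} (hv : memV A w v) : IsMaxProfile A w v (profile A w v) := by
  have h : ∃ L, IsMaxProfile A w v L := exists_maxProfile A w hv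
  rw [profile, dif_pos h]
  exact h.choose_spec

lemma profile_mem {v : Q × ℕ} (hv : memV A w v) : profile A w v ∈ runProfiles A w v :=
  (profile_spec A w hv).1

lemma profile_length {v : Q × ℕ} (hv : memV A w v) : (profile A w v).length = v.2 + 1 :=
  length_of_mem_runProfiles A w (profile_mem A w hv)

lemma extend_runProfile {u v : Q × ℕ} {L : List ℕ} (huv : edgeG A w u v)
    (hL : L ∈ runProfiles A w u) : L ++ [fval A v] ∈ runProfiles A w v := by
  classical
  obtain ⟨p, hp0, hstep, hpu, rfl⟩ := hL
  obtain ⟨-, hv2, hρ⟩ := huv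
  refine ⟨fun j => if j ≤ u.2 then p j else v.1, ?_, ?_, ?_, ?_⟩
  · simpa using hp0
  · intro j hj
    rw [hv2] at hj
    rcases lt_or_eq_of_le (Nat.lt_succ_iff.mp hj) with hj' | hj'
    · have h1 : j + 1 ≤ u.2 := hj'
      have h2 : j ≤ u.2 := le_of_lt hj'
      simpa [h1, h2] using hstep j hj'
    · subst hj'
      show (if u.2 + 1 ≤ u.2 then p (u.2 + 1) else v.1)
          ∈ A.ρ (if u.2 ≤ u.2 then p u.2 else v.1) (w u.2)
      rw [if_neg (show ¬ (u.2 + 1 ≤ u.2) by omega), if_pos (le_refl u.2), hpu]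
      exact hρ
  · show (if v.2 ≤ u.2 then p v.2 else v.1) = v.1
    rw [if_neg (show ¬ (v.2 ≤ u.2) by omega)]
  · rw [hv2, List.range_succ (n := u.2 + 1), List.map_append]
    congr 1
    · apply List.map_congr_left
      intro j hj
      rw [List.mem_range] at hj
      have : j ≤ u.2 := Nat.lt_succ_iff.mp hj
      simp [this]
    · simp only [List.map_cons, List.map_nil]
      have hvv : (if u.2 + 1 ≤ u.2 then p (u.2 + 1) else v.1) = v.1 :=
        if_neg (show ¬ (u.2 + 1 ≤ u.2) by omega)
      simp [hvv, fval]

lemma memV_of_edge {u v : Q × ℕ} (huv : edgeG A w u v) : memV A w v :=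
  ⟨_, extend_runProfile A w huv (profile_mem A w huv.1)⟩

lemma decompose_runProfile {v : Q × ℕ} {i : ℕ} {L : List ℕ} (hv2 : v.2 = i + 1)
    (hL : L ∈ runProfiles A w v) :
    ∃ u L', edgeG A w u v ∧ L' ∈ runProfiles A w u ∧ L = L' ++ [fval A v] := by
  classical
  obtain ⟨p, hp0, hstep, hpv, rfl⟩ := hL
  have hii : i < v.2 := by omega
  have hL' : (List.range (i + 1)).map (fun j => if p j ∈ A.F then 1 else 0)
      ∈ runProfiles A w (p i, i) := ⟨p, hp0, fun j hj => hstep j (by omega), rfl, rfl⟩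
  refine ⟨(p i, i), _, ⟨⟨_, hL'⟩, by omega, ?_⟩, hL', ?_⟩
  · have := hstep i hii
    rw [show i + 1 = v.2 by omega, hpv] at this
    exact this
  · rw [hv2, List.range_succ (n := i + 1), List.map_append]
    congr 1
    simp only [List.map_cons, List.map_nil]
    rw [show p (i + 1) = v.1 by rw [← hv2, hpv]]
    simp [fval]

lemma lex_append {L₁ L₂ M₁ M₂ : List ℕ} (hlen : L₁.length = L₂.length)
    (h : List.Lex (· < ·) L₁ L₂) : List.Lex (· < ·) (L₁ ++ M₁) (L₂ ++ M₂) := by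
  induction h with
  | nil => simp at hlen
  | @cons a l₁ l₂ h ih =>
      exact List.Lex.cons (ih (by simpa using hlen))
  | rel h => exact List.Lex.rel h

lemma append_le {L₁ L₂ : List ℕ} (M : List ℕ) (hlen : L₁.length = L₂.length)
    (h : L₁ ≤ L₂) : L₁ ++ M ≤ L₂ ++ M := by
  rcases lt_or_eq_of_le h with h | h
  · exact le_of_lt (lex_append hlen h)
  · rw [h]

lemma profile_of_edgeG' {u v : Q × ℕ} (h : edgeG' A w u v) :
    profile A w v = profile A w u ++ [fval A v] := by
  have hu : memV A w u := h.1.1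
  have hv : memV A w v := memV_of_edge A w h.1
  have hv2 : v.2 = u.2 + 1 := h.1.2.1
  obtain ⟨u', L', he', hL', hdec⟩ := decompose_runProfile A w hv2 (profile_mem A w hv)
  have hu' : memV A w u' := he'.1
  have hu'2 : u'.2 = u.2 := by have := he'.2.1; omega
  have h1 : L' ≤ profile A w u' := lexLE_iff.mp ((profile_spec A w hu').2 L' hL')
  have h2 : profile A w u' ≤ profile A w u := lexLE_iff.mp (h.2 u' he')
  have hlen : L'.length = (profile A w u).length := by
    rw [length_of_mem_runProfiles A w hL', profile_length A w hu, hu'2]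
  have h4 : profile A w v ≤ profile A w u ++ [fval A v] := by
    rw [hdec]; exact append_le _ hlen (le_trans h1 h2)
  have h5 : profile A w u ++ [fval A v] ≤ profile A w v :=
    lexLE_iff.mp ((profile_spec A w hv).2 _ (extend_runProfile A w h.1 (profile_mem A w hu)))
  exact le_antisymm h4 h5

lemma mem_classOf_self {u : Q × ℕ} (hu : memV A w u) : u ∈ classOf A w u := ⟨hu, rfl, rfl⟩

lemma classOf_eq_of {u u' : Q × ℕ} (h1 : u.2 = u'.2) (h2 : profile A w u = profile A w u') :
    classOf A w u = classOf A w u' := by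
  ext x
  simp only [classOf, Set.mem_setOf_eq, h1, h2]

lemma unique_parent {C C' D : Set (Q × ℕ)} (h : childC A w C D) (h' : childC A w C' D) :
    C = C' := by
  obtain ⟨u, v, he, hv, rfl, hD⟩ := h
  obtain ⟨u', v', he', hv', rfl, hD'⟩ := h'
  have hDD : classOf A w v = classOf A w v' := by rw [← hD, ← hD']
  have hvmem : v ∈ classOf A w v' := hDD ▸ mem_classOf_self A w hv
  obtain ⟨-, hlev, hprof⟩ := hvmem
  have e1 := profile_of_edgeG' A w he
  have e2 := profile_of_edgeG' A w he'
  have heq : profile A w u ++ [fval A v] = profile A w u' ++ [fval A v'] := by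
    rw [← e1, ← e2, hprof]
  have hpu : profile A w u = profile A w u' := (List.append_inj' heq rfl).1
  have hl : u.2 = u'.2 := by
    have h1 := he.1.2.1; have h2 := he'.1.2.1; omega
  exact classOf_eq_of A w hl hpu

lemma branch_ne_forever {b b' : ℕ → Set (Q × ℕ)} (hb : IsBranch A w b)
    (hb' : IsBranch A w b') {i : ℕ} (h : b i ≠ b' i) :
    ∀ j, i ≤ j → b j ≠ b' j := by
  intro j hij
  induction j, hij using Nat.le_induction with
  | base => exact h
  | succ n hn ih =>
      intro heq
      exact ih (unique_parent A w (hb.2 n) (heq ▸ hb'.2 n))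

/-- Corollary: the profile tree has finitely many infinite branches. -/
theorem finitely_many_infinite_branches [Fintype Alph] [Fintype Q]
    (A : NBW Alph Q) (w : ℕ → Alph) :
    { b : ℕ → Set (Q × ℕ) | IsBranch A w b }.Finite := by
  classical
  by_contra hfin
  have hinf : { b : ℕ → Set (Q × ℕ) | IsBranch A w b }.Infinite := hfin
  obtain ⟨t, hts, htcard⟩ := hinf.exists_subset_card_eq (Fintype.card Q + 2)
  -- divergence level of two branches
  set g : (ℕ → Set (Q × ℕ)) → (ℕ → Set (Q × ℕ)) → ℕ := fun b b' =>
    if h : ∃ i, b i ≠ b' i then h.choose else 0 with hg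
  set N : ℕ := t.sup fun b => t.sup fun b' => g b b' with hN
  have hdiff : ∀ b ∈ t, ∀ b' ∈ t, b ≠ b' → b N ≠ b' N := by
    intro b hbt b' hb't hne
    have hex : ∃ i, b i ≠ b' i := Function.ne_iff.mp hne
    have hgd : b (g b b') ≠ b' (g b b') := by
      rw [hg]; simp only [dif_pos hex]; exact hex.choose_spec
    have hle : g b b' ≤ N :=
      le_trans (Finset.le_sup (f := fun b' => g b b') hb't)
        (Finset.le_sup (f := fun b => t.sup fun b' => g b b') hbt)
    exact branch_ne_forever A w (hts hbt) (hts hb't) hgd N hle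
  -- representative map into Option Q
  set r : (ℕ → Set (Q × ℕ)) → Option Q := fun b =>
    if h : ∃ u, memV A w u ∧ u.2 = N ∧ b N = classOf A w u then some h.choose.1 else none
    with hr
  have hinj : Set.InjOn r t := by
    intro b hbt b' hb't hrr
    by_contra hne
    have h1 : ∃ u, memV A w u ∧ u.2 = N ∧ b N = classOf A w u := (hts hbt).1 N
    have h2 : ∃ u, memV A w u ∧ u.2 = N ∧ b' N = classOf A w u := (hts hb't).1 N
    rw [hr] at hrr
    simp only [dif_pos h1, dif_pos h2, Option.some.injEq] at hrr
    have hu1 := h1.choose_spec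
    have hu2 := h2.choose_spec
    have huu : h1.choose = h2.choose := Prod.ext hrr (by rw [hu1.2.1, hu2.2.1])
    have : b N = b' N := by rw [hu1.2.2, hu2.2.2, huu]
    exact hdiff b hbt b' hb't hne this
  have hcard : t.card ≤ Fintype.card (Option Q) :=
    Finset.card_le_card_of_injOn r (fun x _ => Finset.mem_univ (r x)) hinj
  rw [htcard] at hcard
  simp at hcard
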